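/- (Theorem 1 of the paper, concrete identity form.) Let X_i, X_j be M_t×L complex matrices with columns x_{i,l} and x_{j,l}, let A_i, A_j be M_t×K complex matrices, and D_i, D_j be L×K complex matrices. Define V(X,A,D) = (Xᵀ·A) ⊙ D. Then V(X_i,A_i,D_i)ᴴ · V(X_j,A_j,D_j) = Σ_{l=1}^{L} (A_i • D_i)ᴴ · ((conj(x_{i,l})·x_{j,l}ᵀ) ⊗ (e_l·e_lᵀ)) · (A_j • D_j). In particular, the Gram matrix V_iᴴ V_j is a linear function of the per-subcarrier cross-covariance matrices conj(x_{i,l})·x_{j,l}ᵀ, l = 1,…,L. -/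

import Mathlib

open Matrix Kronecker

/-- Column-wise Khatri–Rao product of `C : M×R` and `D : N×R`:
the `(M·N)×R` matrix with entries `(C • D)_{(m,n),r} = C_{m,r} · D_{n,r}`. -/
def khatriRao {M N R : Type*} (C : Matrix M R ℂ) (D : Matrix N R ℂ) :
    Matrix (M × N) R ℂ :=
  Matrix.of fun mn r => C mn.1 r * D mn.2 r

/-- `V(X,A,D) = (Xᵀ·A) ⊙ D`. -/
noncomputable def Vmat {Mt L K : Type*} [Fintype Mt]
    (X : Matrix Mt L ℂ) (A : Matrix Mt K ℂ) (D : Matrix L K ℂ) : Matrix L K ℂ :=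
  (Xᵀ * A).hadamard D

/-- Theorem 1 (concrete identity form): the Gram matrix `V_iᴴ·V_j` equals
`Σ_l (A_i • D_i)ᴴ·((conj(x_{i,l})·x_{j,l}ᵀ) ⊗ (e_l·e_lᵀ))·(A_j • D_j)`,
hence is a linear function of the per-subcarrier cross-covariance matrices
`conj(x_{i,l})·x_{j,l}ᵀ`. -/
theorem Vmat_gram_eq_sum_per_subcarrier
    {Mt L K : Type*} [Fintype Mt] [Fintype L] [DecidableEq L]
    (X_i X_j : Matrix Mt L ℂ) (A_i A_j : Matrix Mt K ℂ) (D_i D_j : Matrix L K ℂ) :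
    (Vmat X_i A_i D_i)ᴴ * Vmat X_j A_j D_j =
      ∑ l : L, (khatriRao A_i D_i)ᴴ *
        ((Matrix.vecMulVec (fun m => star (X_i m l)) fun m => X_j m l) ⊗ₖ
          Matrix.single l l (1 : ℂ)) * khatriRao A_j D_j := by
  ext k k'
  simp [Vmat, khatriRao, Matrix.mul_apply, Matrix.sum_apply, hadamard,
    kroneckerMap_apply, vecMulVec_apply, Matrix.single, Fintype.sum_prod_type,
    Finset.mul_sum, Finset.sum_mul, mul_ite, ite_mul, conjTranspose_apply]
  refine Finset.sum_congr rfl fun l _ => ?_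
  simp [ite_and, Finset.sum_ite_eq, Finset.sum_ite_eq']
  exact Finset.sum_congr rfl fun a _ => Finset.sum_congr rfl fun b _ => by ring
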